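/- arXiv:2504.13110 — 6 statements merged into one kernel-verified Lean document; each statement's English description precedes it below -/
import Mathlib

section
/- Let a, b ≥ 0 and ε ≥ 0. Suppose X : [0,∞) → ℝ is continuously differentiable with X(0) = 0 and satisfies the differential inequality X'(t) ≤ -a·X(t) + b·∫₀ᵗ X(s) ds + ε for all t ≥ 0. Then for all t ≥ 0, X(t) ≤ exp(b·t/a) · ε / √(a² + 4b). -/
open MeasureTheory intervalIntegral

noncomputable def Eaux (ν t : ℝ) : ℝ := if ν = 0 then t else (Real.exp (ν * t) - 1) / ν

lemma Eaux_zero (ν : ℝ) : Eaux ν 0 = 0 := by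
  unfold Eaux; split <;> simp

lemma Eaux_hasDeriv (ν t : ℝ) : HasDerivAt (Eaux ν) (Real.exp (ν * t)) t := by
  unfold Eaux
  by_cases h : ν = 0
  · simp only [h, if_true, zero_mul, Real.exp_zero]
    exact hasDerivAt_id t
  · simp only [h, if_false]
    have h1 : HasDerivAt (fun t : ℝ => ν * t) ν t := by
      simpa using (hasDerivAt_id t).const_mul ν
    have h2 : HasDerivAt (fun t : ℝ => Real.exp (ν * t)) (Real.exp (ν * t) * ν) t :=
      (Real.hasDerivAt_exp (ν * t)).comp t h1
    have h3 := (h2.sub_const 1).div_const ν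
    refine h3.congr_deriv ?_
    field_simp

lemma Eaux_id (ν t : ℝ) : ν * Eaux ν t = Real.exp (ν * t) - 1 := by
  unfold Eaux
  by_cases h : ν = 0
  · simp [h]
  · simp only [h, if_false]
    field_simp

lemma key_gronwall (a b ε : ℝ) (hε : 0 ≤ ε) (X : ℝ → ℝ) (hX0 : X 0 = 0)
    (hdiff : ∀ t, 0 ≤ t → DifferentiableAt ℝ X t)
    (hineq : ∀ t, 0 ≤ t →
      deriv X t ≤ -a * X t + b * (∫ s in (0:ℝ)..t, X s) + ε)
    (μ ν : ℝ) (hsum : μ + ν = -a) (hprod : μ * ν = -b) :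
    ∀ t, 0 ≤ t → X t - μ * (∫ s in (0:ℝ)..t, X s) - ε * Eaux ν t ≤ 0 := by
  intro T hT
  have hXcont : ContinuousOn X (Set.Ici 0) := fun s hs =>
    (hdiff s hs).continuousAt.continuousWithinAt
  set Y : ℝ → ℝ := fun t => ∫ s in (0:ℝ)..t, X s with hY
  set g : ℝ → ℝ := fun t => Real.exp (-ν * t) * (X t - μ * Y t - ε * Eaux ν t) with hg
  -- continuity of Y on Icc 0 T
  have hIccIci : Set.Icc (0:ℝ) T ⊆ Set.Ici 0 := fun x hx => hx.1
  have hXIcc : ContinuousOn X (Set.Icc 0 T) := hXcont.mono hIccIci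
  have hYcont : ContinuousOn Y (Set.Icc 0 T) := by
    have : Set.uIcc (0:ℝ) T = Set.Icc 0 T := Set.uIcc_of_le hT
    rw [← this]
    exact intervalIntegral.continuousOn_primitive_interval
      ((hXIcc.mono (by rw [this])).integrableOn_compact isCompact_uIcc)
  -- derivative of Y at points of Ioi 0
  have hYderiv : ∀ x : ℝ, 0 < x → HasDerivAt Y (X x) x := by
    intro x hx
    have hint : IntervalIntegrable X volume 0 x :=
      (hXcont.mono (by rw [Set.uIcc_of_le hx.le]; exact fun y hy => hy.1)).intervalIntegrable
    have hmeas : StronglyMeasurableAtFilter X (nhds x) volume :=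
      (hXcont.mono (fun y (hy : y ∈ Set.Ioi (0:ℝ)) => Set.mem_Ici.mpr (le_of_lt hy))).stronglyMeasurableAtFilter
        isOpen_Ioi x hx
    exact intervalIntegral.integral_hasDerivAt_right hint hmeas
      (hdiff x hx.le).continuousAt
  -- g is antitone on Icc 0 T
  have hganti : AntitoneOn g (Set.Icc 0 T) := by
    have hderivg : ∀ x ∈ Set.Ioo (0:ℝ) T,
        HasDerivAt g (Real.exp (-ν * x) *
          ((deriv X x - μ * X x - ε * Real.exp (ν * x))
            - ν * (X x - μ * Y x - ε * Eaux ν x))) x := by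
      intro x hx
      have hX' : HasDerivAt X (deriv X x) x := (hdiff x hx.1.le).hasDerivAt
      have hc : HasDerivAt (fun t => X t - μ * Y t - ε * Eaux ν t)
          (deriv X x - μ * X x - ε * Real.exp (ν * x)) x :=
        (hX'.sub ((hYderiv x hx.1).const_mul μ)).sub ((Eaux_hasDeriv ν x).const_mul ε)
      have h1 : HasDerivAt (fun t : ℝ => -ν * t) (-ν * 1) x :=
        (hasDerivAt_id x).const_mul (-ν)
      have he : HasDerivAt (fun t : ℝ => Real.exp (-ν * t))
          (Real.exp (-ν * x) * (-ν * 1)) x :=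
        (Real.hasDerivAt_exp (-ν * x)).comp x h1
      have := he.mul hc
      refine this.congr_deriv ?_
      ring
    apply antitoneOn_of_deriv_nonpos (convex_Icc 0 T)
    · apply ContinuousOn.mul (Real.continuous_exp.comp (by continuity)).continuousOn
      apply ContinuousOn.sub (ContinuousOn.sub hXIcc (hYcont.const_smul μ))
      have hEdiff : Differentiable ℝ (Eaux ν) := fun t => (Eaux_hasDeriv ν t).differentiableAt
      have hEcont : Continuous (Eaux ν) := hEdiff.continuous
      exact (continuous_const.mul hEcont).continuousOn
    · intro x hx
      rw [interior_Icc] at hx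
      exact ((hderivg x hx).differentiableAt).differentiableWithinAt
    · intro x hx
      rw [interior_Icc] at hx
      rw [(hderivg x hx).deriv]
      have hexp : 0 < Real.exp (-ν * x) := Real.exp_pos _
      have hkey : deriv X x - μ * X x - ε * Real.exp (ν * x)
          - ν * (X x - μ * Y x - ε * Eaux ν x) ≤ 0 := by
        have h1 := hineq x hx.1.le
        have h2 := Eaux_id ν x
        have hYx : Y x = ∫ s in (0:ℝ)..x, X s := rfl
        have heq : deriv X x - μ * X x - ε * Real.exp (ν * x)
            - ν * (X x - μ * Y x - ε * Eaux ν x)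
            = deriv X x - (-a * X x + b * (∫ s in (0:ℝ)..x, X s) + ε) := by
          linear_combination (-(X x)) * hsum + Y x * hprod + ε * h2 + (-b) * hYx
        linarith [heq, h1]
      exact mul_nonpos_of_nonneg_of_nonpos hexp.le hkey
  have h0mem : (0:ℝ) ∈ Set.Icc (0:ℝ) T := ⟨le_refl 0, hT⟩
  have hTmem : T ∈ Set.Icc (0:ℝ) T := ⟨hT, le_refl T⟩
  have hgT := hganti h0mem hTmem hT
  have hg0 : g 0 = 0 := by
    simp [hg, hY, hX0, Eaux_zero, intervalIntegral.integral_same]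
  rw [hg0] at hgT
  have hexp : 0 < Real.exp (-ν * T) := Real.exp_pos _
  have hgT' : Real.exp (-ν * T) * (X T - μ * Y T - ε * Eaux ν T) ≤ 0 := hgT
  have hYT : Y T = ∫ s in (0:ℝ)..T, X s := rfl
  nlinarith [hgT', hexp, hYT]

/-- ODE comparison principle for the delayed-feedback linear differential inequality. -/
theorem stmt0 (a b ε : ℝ) (ha : 0 < a) (hb : 0 ≤ b) (hε : 0 ≤ ε)
    (X : ℝ → ℝ)
    (hX0 : X 0 = 0)
    (hdiff : ∀ t, 0 ≤ t → DifferentiableAt ℝ X t)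
    (hcont : ContinuousOn (deriv X) (Set.Ici 0))
    (hineq : ∀ t, 0 ≤ t →
      deriv X t ≤ -a * X t + b * (∫ s in (0:ℝ)..t, X s) + ε) :
    ∀ t, 0 ≤ t → X t ≤ Real.exp (b * t / a) * ε / Real.sqrt (a ^ 2 + 4 * b) := by
  intro t ht
  set s := Real.sqrt (a ^ 2 + 4 * b) with hs
  have hs2 : s ^ 2 = a ^ 2 + 4 * b := Real.sq_sqrt (by positivity)
  have hsnn : 0 ≤ s := Real.sqrt_nonneg _
  have hsa : a ≤ s := by nlinarith [hs2, hsnn, ha, hb]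
  have hspos : 0 < s := lt_of_lt_of_le ha hsa
  set lp := (-a + s) / 2 with hlp
  set lm := (-a - s) / 2 with hlm
  have hlp0 : 0 ≤ lp := by rw [hlp]; linarith
  have hlm0 : lm ≤ 0 := by rw [hlm]; linarith
  have hsum1 : lp + lm = -a := by rw [hlp, hlm]; ring
  have hprod1 : lp * lm = -b := by rw [hlp, hlm]; nlinarith [hs2]
  have hA := key_gronwall a b ε hε X hX0 hdiff hineq lp lm hsum1 hprod1 t ht
  have hB := key_gronwall a b ε hε X hX0 hdiff hineq lm lp (by linarith) (by nlinarith) t ht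
  -- combine: (lp - lm) * X t ≤ ε * (exp (lp*t) - exp (lm*t))
  set Y := ∫ u in (0:ℝ)..t, X u with hY
  have hEp := Eaux_id lp t
  have hEm := Eaux_id lm t
  have hcomb : s * X t ≤ ε * (Real.exp (lp * t) - Real.exp (lm * t)) := by
    have h1 : lp * (X t - lm * Y - ε * Eaux lp t) ≤ 0 :=
      mul_nonpos_of_nonneg_of_nonpos hlp0 hB
    have h2 : (-lm) * (X t - lp * Y - ε * Eaux lm t) ≤ 0 :=
      mul_nonpos_of_nonneg_of_nonpos (by linarith) hA
    have hslplm : lp - lm = s := by rw [hlp, hlm]; ring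
    have expand : s * X t - (ε * (lp * Eaux lp t) - ε * (lm * Eaux lm t))
        = lp * (X t - lm * Y - ε * Eaux lp t) + (-lm) * (X t - lp * Y - ε * Eaux lm t) := by
      linear_combination (-(X t)) * hslplm
    have key2 : s * X t ≤ ε * (lp * Eaux lp t) - ε * (lm * Eaux lm t) := by
      linarith [h1, h2, expand]
    have key3 : ε * (lp * Eaux lp t) - ε * (lm * Eaux lm t)
        = ε * (Real.exp (lp * t) - Real.exp (lm * t)) := by rw [hEp, hEm]; ring
    linarith [key2, key3]
  have hexpm : 0 < Real.exp (lm * t) := Real.exp_pos _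
  have hlpba : lp ≤ b / a := by
    rw [hlp, div_le_div_iff₀ (by norm_num) ha]
    nlinarith [hs2, sq_nonneg (s * a - a ^ 2 - 2 * b), hspos]
  have hexple : Real.exp (lp * t) ≤ Real.exp (b * t / a) := by
    apply Real.exp_le_exp.mpr
    calc lp * t ≤ (b / a) * t := mul_le_mul_of_nonneg_right hlpba ht
    _ = b * t / a := by ring
  have hfinal : s * X t ≤ Real.exp (b * t / a) * ε := by
    calc s * X t ≤ ε * (Real.exp (lp * t) - Real.exp (lm * t)) := hcomb
    _ ≤ ε * Real.exp (lp * t) := by nlinarith [hexpm]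
    _ ≤ ε * Real.exp (b * t / a) := mul_le_mul_of_nonneg_left hexple hε
    _ = Real.exp (b * t / a) * ε := by ring
  rw [le_div_iff₀ hspos]
  linarith [hfinal]
end

section
/- Let Z : [0,∞) → ℝ be continuous, Z(0) = 0, and suppose for a, b ≥ 0 and ε > 0 that Z'(t) ≤ -a·Z(t) + b·∫₀ᵗ Z(s) ds − ε for all t. Then Z(t) ≤ 0 for all t ≥ 0. -/
open MeasureTheory intervalIntegral Topology Filter

/-- Nonpositivity lemma: a differentiable function starting at `0` whose derivative satisfies
`Z' ≤ -a·Z + b·∫₀ᵗ Z − ε` with `ε > 0` stays nonpositive. -/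
theorem stmt2 (a b ε : ℝ) (ha : 0 ≤ a) (hb : 0 ≤ b) (hε : 0 < ε)
    (Z : ℝ → ℝ) (hZcont : Continuous Z) (hZ0 : Z 0 = 0)
    (hdiff : ∀ t, 0 ≤ t → DifferentiableAt ℝ Z t)
    (hineq : ∀ t, 0 ≤ t →
      deriv Z t ≤ -a * Z t + b * (∫ s in (0:ℝ)..t, Z s) - ε) :
    ∀ t, 0 ≤ t → Z t ≤ 0 := by
  intro t ht
  by_contra hpos
  push_neg at hpos
  set S : Set ℝ := {u | 0 ≤ u ∧ 0 < Z u} with hS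
  have hne : S.Nonempty := ⟨t, ht, hpos⟩
  have hbdd : BddBelow S := ⟨0, fun u hu => hu.1⟩
  set c := sInf S with hc
  have hc0 : 0 ≤ c := le_csInf hne fun u hu => hu.1
  have hccl : c ∈ closure S := csInf_mem_closure hne hbdd
  have hZc_nonneg : 0 ≤ Z c := by
    have hsub : closure S ⊆ {u | 0 ≤ Z u} :=
      closure_minimal (fun u hu => hu.2.le) (isClosed_le continuous_const hZcont)
    exact hsub hccl
  have hZle : ∀ u, 0 ≤ u → u < c → Z u ≤ 0 := by
    intro u hu huc
    by_contra h
    push_neg at h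
    exact absurd (csInf_le hbdd ⟨hu, h⟩) (not_le.mpr huc)
  have hZc_nonpos : Z c ≤ 0 := by
    rcases eq_or_lt_of_le hc0 with h0 | h0
    · simp [← h0, hZ0]
    · by_contra h
      push_neg at h
      have h1 : ∀ᶠ u in 𝓝[<] c, 0 < Z u :=
        (Filter.Tendsto.eventually_lt continuousWithinAt_const hZcont.continuousWithinAt ?_)
      · have h2 : ∀ᶠ u in 𝓝[<] c, 0 < u :=
          eventually_nhdsWithin_of_eventually_nhds
            (eventually_gt_nhds h0)
        have h3 : ∀ᶠ u in 𝓝[<] c, u ∈ Set.Iio c := self_mem_nhdsWithin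
        obtain ⟨u, ⟨hZu, hu0⟩, huc⟩ := ((h1.and h2).and h3).exists
        exact absurd (hZle u hu0.le huc) (not_le.mpr hZu)
      · simpa using h
  have hZc : Z c = 0 := le_antisymm hZc_nonpos hZc_nonneg
  have hint : (∫ s in (0:ℝ)..c, Z s) ≤ 0 := by
    have h0 : 0 ≤ ∫ s in (0:ℝ)..c, -Z s := by
      apply intervalIntegral.integral_nonneg hc0
      intro u hu
      rcases eq_or_lt_of_le hu.2 with h | h
      · rw [h, hZc]; simp
      · simpa using hZle u hu.1 h
    rw [intervalIntegral.integral_neg] at h0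
    linarith
  have hder : deriv Z c < 0 := by
    have := hineq c hc0
    nlinarith
  have hslope : ∀ᶠ u in 𝓝[≠] c, slope Z c u < 0 :=
    (hasDerivAt_iff_tendsto_slope.mp (hdiff c hc0).hasDerivAt).eventually_lt_const hder
  have h2 : ∀ᶠ u in 𝓝[>] c, slope Z c u < 0 :=
    hslope.filter_mono (nhdsWithin_mono c fun u (hu : c < u) => hu.ne')
  have hfreq : ∃ᶠ u in 𝓝[>] c, u ∈ S := by
    rw [Filter.frequently_iff]
    intro U hU
    obtain ⟨v, hv, hsub⟩ := mem_nhdsGT_iff_exists_Ioo_subset.mp hU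
    obtain ⟨s, hsS, hsv⟩ := exists_lt_of_csInf_lt hne hv
    have hcs : c ≤ s := csInf_le hbdd hsS
    have hcs' : c < s := lt_of_le_of_ne hcs (by
      intro h; rw [← h] at hsS; exact absurd hZc (ne_of_gt hsS.2))
    exact ⟨s, hsub ⟨hcs', hsv⟩, hsS⟩
  have h3 : ∀ᶠ u in 𝓝[>] c, u ∈ Set.Ioi c := self_mem_nhdsWithin
  obtain ⟨u, huS, hus, hui⟩ := (hfreq.and_eventually (h2.and h3)).exists
  have hden : (0:ℝ) < u - c := sub_pos.mpr hui
  have hsl : (Z u - Z c) / (u - c) < 0 := by rwa [slope_def_field] at hus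
  have hnum : Z u - Z c < 0 := by
    by_contra h
    push_neg at h
    exact absurd hsl (not_lt.mpr (div_nonneg h hden.le))
  have := huS.2
  linarith
end

section
/- Let Λ be a finite index set. For each λ ∈ Λ, let B_λ be a finite set of functions v : W → ℝᵈ (for some set W), and let η_λ > 0 satisfy Σ_{v ∈ B_λ} v(w) v(w)ᵀ ⪯ η_λ² I_d for all w ∈ W, with Σ_{λ∈Λ} η_λ² ≤ C_b. Given Δ : [m] → ℝᵈ and weights w₁,...,w_m ∈ W, define φ_v(Δ) := |m⁻¹ Σ_i v(wᵢ)ᵀ Δ(i)| and Ψ(Δ) := Σ_{λ∈Λ} η_λ (Σ_{v∈B_λ} φ_v(Δ)²)^{1/2}. Then for any G : [m] → ℝᵈ, the directional derivative of Ψ at Δ in direction G satisfies |⟨∇Ψ(Δ), G⟩| ≤ C_b · m⁻¹ Σ_i ‖G(i)‖, where ⟨∇Ψ(Δ), G⟩ := (d/ds) Ψ(Δ + sG)|_{s=0}. -/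
/-- L1 perturbation property of the balanced potential `Ψ`: the directional derivative of
`Ψ` at `Δ` in direction `G` is bounded by `C_b · m⁻¹ Σ_i ‖G(i)‖`. -/
theorem stmt8 {W : Type*} (d m : ℕ) (hm : 0 < m) {Λ : Type*} [Fintype Λ]
    (N : Λ → ℕ) (V : (l : Λ) → Fin (N l) → W → EuclideanSpace ℝ (Fin d))
    (η : Λ → ℝ) (hη : ∀ l, 0 < η l) (Cb : ℝ)
    (hframe : ∀ (l : Λ) (w : W) (u : EuclideanSpace ℝ (Fin d)),
      ∑ j, (inner ℝ (V l j w) u : ℝ) ^ 2 ≤ (η l) ^ 2 * ‖u‖ ^ 2)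
    (hsum : ∑ l, (η l) ^ 2 ≤ Cb)
    (ws : Fin m → W) (Δ G : Fin m → EuclideanSpace ℝ (Fin d))
    (Ψ : (Fin m → EuclideanSpace ℝ (Fin d)) → ℝ)
    (hΨ : ∀ Δ' : Fin m → EuclideanSpace ℝ (Fin d),
      Ψ Δ' = ∑ l, η l * Real.sqrt (∑ j,
        |(m : ℝ)⁻¹ * ∑ i, (inner ℝ (V l j (ws i)) (Δ' i) : ℝ)| ^ 2))
    (hnonzero : ∀ l : Λ,
      0 < ∑ j, |(m : ℝ)⁻¹ * ∑ i, (inner ℝ (V l j (ws i)) (Δ i) : ℝ)| ^ 2)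
    (D : ℝ)
    (hD : HasDerivAt (fun s : ℝ => Ψ (fun i => Δ i + s • G i)) D 0) :
    |D| ≤ Cb * ((m : ℝ)⁻¹ * ∑ i, ‖G i‖) := by
  classical
  set A : (l : Λ) → Fin (N l) → ℝ :=
    fun l j => (m : ℝ)⁻¹ * ∑ i, (inner ℝ (V l j (ws i)) (Δ i) : ℝ) with hA
  set B : (l : Λ) → Fin (N l) → ℝ :=
    fun l j => (m : ℝ)⁻¹ * ∑ i, (inner ℝ (V l j (ws i)) (G i) : ℝ) with hB
  have hQpos : ∀ l, 0 < ∑ j, (A l j) ^ 2 := by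
    intro l
    have := hnonzero l
    simpa only [hA, sq_abs] using this
  -- the function rewritten
  have hfun : (fun s : ℝ => Ψ (fun i => Δ i + s • G i)) =
      fun s => ∑ l, η l * Real.sqrt (∑ j, (A l j + s * B l j) ^ 2) := by
    funext s
    rw [hΨ]
    refine Finset.sum_congr rfl fun l _ => ?_
    congr 1
    congr 1
    refine Finset.sum_congr rfl fun j _ => ?_
    rw [sq_abs]
    congr 1
    have h1 : ∀ i : Fin m, (inner ℝ (V l j (ws i)) (Δ i + s • G i) : ℝ)
        = (inner ℝ (V l j (ws i)) (Δ i) : ℝ) + s * (inner ℝ (V l j (ws i)) (G i) : ℝ) := by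
      intro i
      rw [inner_add_right, real_inner_smul_right]
    have h2 : (∑ i, ((inner ℝ (V l j (ws i)) (Δ i) : ℝ) + s * (inner ℝ (V l j (ws i)) (G i) : ℝ)))
        = (∑ i, (inner ℝ (V l j (ws i)) (Δ i) : ℝ))
          + s * ∑ i, (inner ℝ (V l j (ws i)) (G i) : ℝ) := by
      rw [Finset.sum_add_distrib, Finset.mul_sum]
    calc (m : ℝ)⁻¹ * ∑ i, (inner ℝ (V l j (ws i)) (Δ i + s • G i) : ℝ)
        = (m : ℝ)⁻¹ * ((∑ i, (inner ℝ (V l j (ws i)) (Δ i) : ℝ))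
          + s * ∑ i, (inner ℝ (V l j (ws i)) (G i) : ℝ)) := by
          rw [← h2]
          congr 1
          exact Finset.sum_congr rfl fun i _ => h1 i
      _ = A l j + s * B l j := by rw [hA, hB]; ring
  -- compute the derivative
  have hD2 : HasDerivAt (fun s : ℝ => Ψ (fun i => Δ i + s • G i))
      (∑ l, η l * ((∑ j, A l j * B l j) / Real.sqrt (∑ j, (A l j) ^ 2))) 0 := by
    rw [hfun]
    apply HasDerivAt.fun_sum
    intro l _
    have hg : HasDerivAt (fun s : ℝ => ∑ j, (A l j + s * B l j) ^ 2)
        (∑ j, 2 * A l j * B l j) 0 := by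
      apply HasDerivAt.fun_sum
      intro j _
      have h1 : HasDerivAt (fun s : ℝ => A l j + s * B l j) (B l j) 0 := by
        simpa using ((hasDerivAt_id (0:ℝ)).mul_const (B l j)).const_add (A l j)
      have := h1.pow 2
      simpa [Pi.pow_def] using this
    have hne : (∑ j, (A l j + (0:ℝ) * B l j) ^ 2) ≠ 0 := by
      simpa using (hQpos l).ne'
    have hder := (hg.sqrt (by simpa using (hQpos l).ne')).const_mul (η l)
    refine hder.congr_deriv ?_
    have h0 : (∑ j, (A l j + (0:ℝ) * B l j) ^ 2) = ∑ j, (A l j) ^ 2 := by simp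
    have h2 : (∑ j, 2 * A l j * B l j) = 2 * ∑ j, A l j * B l j := by
      rw [Finset.mul_sum]
      exact Finset.sum_congr rfl fun j _ => by ring
    rw [h0, h2, mul_div_mul_left _ _ (two_ne_zero)]
  have hDeq : D = ∑ l, η l * ((∑ j, A l j * B l j) / Real.sqrt (∑ j, (A l j) ^ 2)) :=
    hD.unique hD2
  set T : ℝ := (m : ℝ)⁻¹ * ∑ i, ‖G i‖ with hT
  have hTnn : 0 ≤ T := by
    apply mul_nonneg (by positivity)
    exact Finset.sum_nonneg fun i _ => norm_nonneg _
  -- key bound per l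
  have hkey : ∀ l, |η l * ((∑ j, A l j * B l j) / Real.sqrt (∑ j, (A l j) ^ 2))|
      ≤ (η l) ^ 2 * T := by
    intro l
    have hQ := hQpos l
    have hsq : 0 < Real.sqrt (∑ j, (A l j) ^ 2) := Real.sqrt_pos.mpr hQ
    -- Cauchy-Schwarz
    have hCS : |∑ j, A l j * B l j| ≤
        Real.sqrt (∑ j, (A l j) ^ 2) * Real.sqrt (∑ j, (B l j) ^ 2) := by
      have h := Finset.sum_mul_sq_le_sq_mul_sq Finset.univ (A l) (B l)
      calc |∑ j, A l j * B l j| = Real.sqrt ((∑ j, A l j * B l j) ^ 2) := by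
            rw [Real.sqrt_sq_eq_abs]
        _ ≤ Real.sqrt ((∑ j, (A l j) ^ 2) * ∑ j, (B l j) ^ 2) := Real.sqrt_le_sqrt h
        _ = Real.sqrt (∑ j, (A l j) ^ 2) * Real.sqrt (∑ j, (B l j) ^ 2) := by
            rw [Real.sqrt_mul (Finset.sum_nonneg fun j _ => sq_nonneg _)]
    -- Minkowski bound : sqrt (∑ j (B l j)^2) ≤ η l * T
    have hMink : Real.sqrt (∑ j, (B l j) ^ 2) ≤ η l * T := by
      set x : Fin m → EuclideanSpace ℝ (Fin (N l)) :=
        fun i => WithLp.toLp 2 (fun j => (inner ℝ (V l j (ws i)) (G i) : ℝ)) with hx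
      have hnormx : ∀ i, ‖x i‖ = Real.sqrt (∑ j, (inner ℝ (V l j (ws i)) (G i) : ℝ) ^ 2) := by
        intro i
        rw [EuclideanSpace.norm_eq]
        congr 1
        refine Finset.sum_congr rfl fun j _ => ?_
        rw [Real.norm_eq_abs, sq_abs]
      have hsumx : ‖∑ i, x i‖
          = Real.sqrt (∑ j, (∑ i, (inner ℝ (V l j (ws i)) (G i) : ℝ)) ^ 2) := by
        rw [EuclideanSpace.norm_eq]
        congr 1
        refine Finset.sum_congr rfl fun j _ => ?_
        rw [Real.norm_eq_abs, sq_abs]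
        congr 1
        rw [WithLp.ofLp_sum, Finset.sum_apply]
      have htri : ‖∑ i, x i‖ ≤ ∑ i, ‖x i‖ := norm_sum_le _ _
      have hxi : ∀ i, ‖x i‖ ≤ η l * ‖G i‖ := by
        intro i
        rw [hnormx i]
        calc Real.sqrt (∑ j, (inner ℝ (V l j (ws i)) (G i) : ℝ) ^ 2)
            ≤ Real.sqrt ((η l) ^ 2 * ‖G i‖ ^ 2) := Real.sqrt_le_sqrt (hframe l (ws i) (G i))
          _ = η l * ‖G i‖ := by
              rw [Real.sqrt_mul (by positivity), Real.sqrt_sq (hη l).le,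
                Real.sqrt_sq (norm_nonneg _)]
      have hBsum : Real.sqrt (∑ j, (B l j) ^ 2)
          = (m : ℝ)⁻¹ * Real.sqrt (∑ j, (∑ i, (inner ℝ (V l j (ws i)) (G i) : ℝ)) ^ 2) := by
        have he : (∑ j, (B l j) ^ 2) =
            ((m : ℝ)⁻¹) ^ 2 * ∑ j, (∑ i, (inner ℝ (V l j (ws i)) (G i) : ℝ)) ^ 2 := by
          rw [Finset.mul_sum]
          refine Finset.sum_congr rfl fun j _ => ?_
          rw [hB]; ring
        rw [he, Real.sqrt_mul (by positivity), Real.sqrt_sq (by positivity)]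
      rw [hBsum, ← hsumx]
      calc (m : ℝ)⁻¹ * ‖∑ i, x i‖ ≤ (m : ℝ)⁻¹ * ∑ i, ‖x i‖ :=
            mul_le_mul_of_nonneg_left htri (by positivity)
        _ ≤ (m : ℝ)⁻¹ * ∑ i, η l * ‖G i‖ := by
            apply mul_le_mul_of_nonneg_left _ (by positivity)
            exact Finset.sum_le_sum fun i _ => hxi i
        _ = η l * T := by rw [hT, ← Finset.mul_sum]; ring
    -- combine
    rw [abs_mul, abs_of_pos (hη l), abs_div, abs_of_pos hsq]
    calc η l * (|∑ j, A l j * B l j| / Real.sqrt (∑ j, (A l j) ^ 2))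
        ≤ η l * Real.sqrt (∑ j, (B l j) ^ 2) := by
          apply mul_le_mul_of_nonneg_left _ (hη l).le
          rw [div_le_iff₀ hsq]
          calc |∑ j, A l j * B l j| ≤ Real.sqrt (∑ j, (A l j) ^ 2) *
                Real.sqrt (∑ j, (B l j) ^ 2) := hCS
            _ = Real.sqrt (∑ j, (B l j) ^ 2) * Real.sqrt (∑ j, (A l j) ^ 2) := mul_comm _ _
      _ ≤ η l * (η l * T) := mul_le_mul_of_nonneg_left hMink (hη l).le
      _ = (η l) ^ 2 * T := by ring
  calc |D| ≤ ∑ l, |η l * ((∑ j, A l j * B l j) / Real.sqrt (∑ j, (A l j) ^ 2))| := by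
        rw [hDeq]; exact Finset.abs_sum_le_sum_abs _ _
    _ ≤ ∑ l, (η l) ^ 2 * T := Finset.sum_le_sum fun l _ => hkey l
    _ = (∑ l, (η l) ^ 2) * T := by rw [Finset.sum_mul]
    _ ≤ Cb * T := mul_le_mul_of_nonneg_right hsum hTnn
end

section
/- Let E : [0, T] → [0,∞) be continuous with E(0) = 0, and suppose that for constants J, ε > 0 and all t ∈ [0,T], E(t) ≤ 2Jt(2ε + E(t)²). If J²T²ε ≤ 1/64, then for all t ∈ [0,T], E(t) ≤ (1 − √(1 − 32J²t²ε))/(4Jt) ≤ 8Jtε. -/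
/-- Inductive squared-error bound: a continuous `E` with `E(0)=0` satisfying the quadratic
self-bound `E(t) ≤ 2Jt(2ε + E(t)²)` stays on the small-solution branch, which is bounded
by `8Jtε`, provided `J²T²ε ≤ 1/64`. -/
theorem stmt11 (T J ε : ℝ) (hT : 0 ≤ T) (hJ : 0 < J) (hε : 0 < ε)
    (E : ℝ → ℝ) (hEcont : ContinuousOn E (Set.Icc 0 T))
    (hE0 : E 0 = 0) (hEnonneg : ∀ t ∈ Set.Icc (0 : ℝ) T, 0 ≤ E t)
    (hEineq : ∀ t ∈ Set.Icc (0 : ℝ) T, E t ≤ 2 * J * t * (2 * ε + E t ^ 2))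
    (hdisc : J ^ 2 * T ^ 2 * ε ≤ 1 / 64) :
    ∀ t ∈ Set.Icc (0 : ℝ) T,
      E t ≤ (1 - Real.sqrt (1 - 32 * J ^ 2 * t ^ 2 * ε)) / (4 * J * t) ∧
      (1 - Real.sqrt (1 - 32 * J ^ 2 * t ^ 2 * ε)) / (4 * J * t) ≤ 8 * J * t * ε := by
  -- bound on the "x" quantity
  have hx : ∀ s ∈ Set.Icc (0:ℝ) T, 32 * J ^ 2 * s ^ 2 * ε ≤ 1 / 2 := by
    intro s hs
    have h1 : s ^ 2 ≤ T ^ 2 := by nlinarith [hs.1, hs.2]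
    nlinarith [mul_le_mul_of_nonneg_left h1 (by positivity : (0:ℝ) ≤ J ^ 2 * ε)]
  -- quadratic inequality for φ = 4 J s E s
  have hquad : ∀ s ∈ Set.Icc (0:ℝ) T,
      1 - 32 * J ^ 2 * s ^ 2 * ε ≤ (4 * J * s * E s - 1) ^ 2 := by
    intro s hs
    have h1 := hEineq s hs
    have h2 : 0 ≤ 8 * J * s := by nlinarith [hs.1, hJ.le]
    nlinarith [mul_nonneg h2 (by linarith : (0:ℝ) ≤ 2 * J * s * (2 * ε + E s ^ 2) - E s)]
  have hne : ∀ s ∈ Set.Icc (0:ℝ) T, 4 * J * s * E s ≠ 1 := by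
    intro s hs h
    have hq := hquad s hs
    have hxs := hx s hs
    rw [h] at hq
    norm_num at hq
    linarith
  -- φ < 1 everywhere by IVT
  have hlt : ∀ s ∈ Set.Icc (0:ℝ) T, 4 * J * s * E s < 1 := by
    intro s hs
    by_contra h
    push_neg at h
    have hcont : ContinuousOn (fun u => 4 * J * u * E u) (Set.Icc 0 s) := by
      apply ContinuousOn.mul
      · exact (continuousOn_const.mul continuousOn_id)
      · exact hEcont.mono (Set.Icc_subset_Icc le_rfl hs.2)
    have hIcc : Set.Icc ((fun u => 4 * J * u * E u) 0) ((fun u => 4 * J * u * E u) s)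
        ⊆ (fun u => 4 * J * u * E u) '' Set.Icc 0 s :=
      intermediate_value_Icc hs.1 hcont
    have h1 : (1:ℝ) ∈ Set.Icc ((fun u => 4 * J * u * E u) 0) ((fun u => 4 * J * u * E u) s) := by
      simp only [hE0, mul_zero]
      exact ⟨by norm_num, h⟩
    obtain ⟨u, hu, hu1⟩ := hIcc h1
    exact hne u ⟨hu.1, le_trans hu.2 hs.2⟩ hu1
  intro t ht
  rcases eq_or_lt_of_le ht.1 with h0 | h0
  · -- t = 0
    subst h0
    simp [hE0]
  · -- t > 0
    have hxt := hx t ht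
    have hxnn : 0 ≤ 32 * J ^ 2 * t ^ 2 * ε := by positivity
    have hDnn : 0 ≤ 1 - 32 * J ^ 2 * t ^ 2 * ε := by linarith
    have hq := hquad t ht
    have hl := hlt t ht
    have hden : 0 < 4 * J * t := by positivity
    constructor
    · -- E t ≤ (1 - √D) / (4Jt)
      rw [le_div_iff₀ hden]
      have hsq : Real.sqrt (1 - 32 * J ^ 2 * t ^ 2 * ε) ≤ 1 - 4 * J * t * E t := by
        have h1 : 1 - 32 * J ^ 2 * t ^ 2 * ε ≤ (1 - 4 * J * t * E t) ^ 2 := by nlinarith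
        calc Real.sqrt (1 - 32 * J ^ 2 * t ^ 2 * ε)
            ≤ Real.sqrt ((1 - 4 * J * t * E t) ^ 2) := Real.sqrt_le_sqrt h1
          _ = 1 - 4 * J * t * E t := by
              rw [Real.sqrt_sq (by linarith)]
      nlinarith
    · -- (1 - √D)/(4Jt) ≤ 8Jtε
      rw [div_le_iff₀ hden]
      have hsq : 1 - 32 * J ^ 2 * t ^ 2 * ε ≤ Real.sqrt (1 - 32 * J ^ 2 * t ^ 2 * ε) := by
        calc (1 - 32 * J ^ 2 * t ^ 2 * ε)
            = Real.sqrt ((1 - 32 * J ^ 2 * t ^ 2 * ε) ^ 2) := (Real.sqrt_sq hDnn).symm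
          _ ≤ Real.sqrt (1 - 32 * J ^ 2 * t ^ 2 * ε) := Real.sqrt_le_sqrt (by nlinarith)
      nlinarith
end

section
/- Let k ≥ 2 be an even integer and let μ be a probability distribution on pairs (α, α') ∈ [−1,1]² with α, α' independent and identically distributed. Let ζ be a random variable (independent of α, α') satisfying E[|ζ|^k] ≤ (C/√d)^k for some constant C. Then E[(αα' + √((1−α²)(1−α'²)) ζ)^k] ≤ (E[α^k])² + O_{k,C}(1/√d), where the implicit constant depends only on k and C. -/
open MeasureTheory ProbabilityTheory

/-- Minkowski-type moment bound: for i.i.d. `α, α'` with values in `[−1,1]`, independent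
`ζ` with `E[|ζ|^k] ≤ (C/√d)^k`, and even `k`,
`E[(αα' + √((1−α²)(1−α'²)) ζ)^k] ≤ (E[α^k])² + O_{k,C}(1/√d)`. -/
theorem stmt12 (k : ℕ) (hk2 : 2 ≤ k) (hke : Even k) (C : ℝ) (hC : 0 < C) :
    ∃ D : ℝ, 0 < D ∧
      ∀ (Ω : Type) (_ : MeasurableSpace Ω) (P : Measure Ω), IsProbabilityMeasure P →
      ∀ d : ℕ, 0 < d →
      ∀ α α' ζ : Ω → ℝ,
        Measurable α → Measurable α' → Measurable ζ →
        (∀ ω, α ω ∈ Set.Icc (-1 : ℝ) 1) → (∀ ω, α' ω ∈ Set.Icc (-1 : ℝ) 1) →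
        IndepFun α α' P → IdentDistrib α α' P P →
        IndepFun (fun ω => (α ω, α' ω)) ζ P →
        Integrable (fun ω => |ζ ω| ^ k) P →
        (∫ ω, |ζ ω| ^ k ∂P) ≤ (C / Real.sqrt d) ^ k →
        (∫ ω, (α ω * α' ω +
            Real.sqrt ((1 - α ω ^ 2) * (1 - α' ω ^ 2)) * ζ ω) ^ k ∂P)
          ≤ (∫ ω, α ω ^ k ∂P) ^ 2 + D / Real.sqrt d := by
  classical
  set M : ℝ := max C 1 with hMdef
  have hM1 : (1 : ℝ) ≤ M := le_max_right _ _
  have hCM : C ≤ M := le_max_left _ _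
  have hM0 : (0 : ℝ) < M := lt_of_lt_of_le one_pos hM1
  refine ⟨2 ^ (k + 1) * M ^ k, by positivity, ?_⟩
  intro Ω mΩ P hP d hd α α' ζ hα hα' hζ hαb hα'b hInd hId hIndζ hIntζ hζk
  have hsd : (1 : ℝ) ≤ Real.sqrt d := by
    rw [show (1 : ℝ) = Real.sqrt 1 by simp]
    exact Real.sqrt_le_sqrt (by exact_mod_cast hd)
  have hsd0 : (0 : ℝ) < Real.sqrt d := lt_of_lt_of_le one_pos hsd
  set t : ℝ := C / Real.sqrt d with htdef
  have ht : 0 < t := div_pos hC hsd0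
  -- bound on moments of ζ of order j, 1 ≤ j ≤ k
  have hζmeas : ∀ j : ℕ, Measurable fun ω => |ζ ω| ^ j := fun j => (hζ.abs).pow_const j
  have hζint : ∀ j : ℕ, j ≤ k → Integrable (fun ω => |ζ ω| ^ j) P := by
    intro j hjk
    refine Integrable.mono ((integrable_const (1 : ℝ)).add hIntζ)
      (hζmeas j).aestronglyMeasurable (Filter.Eventually.of_forall fun ω => ?_)
    have h1 : |ζ ω| ^ j ≤ 1 + |ζ ω| ^ k := by
      rcases le_or_gt (|ζ ω|) 1 with h | h
      · have : |ζ ω| ^ j ≤ 1 := pow_le_one₀ (abs_nonneg _) h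
        nlinarith [pow_nonneg (abs_nonneg (ζ ω)) k]
      · have : |ζ ω| ^ j ≤ |ζ ω| ^ k := pow_le_pow_right₀ h.le hjk
        linarith
    have h0 : (0:ℝ) ≤ |ζ ω| ^ j := pow_nonneg (abs_nonneg _) j
    simp only [Pi.add_apply, Real.norm_eq_abs, abs_of_nonneg h0]
    calc |ζ ω| ^ j ≤ 1 + |ζ ω| ^ k := h1
    _ ≤ |1 + |ζ ω| ^ k| := le_abs_self _
  have hζmom : ∀ j : ℕ, 1 ≤ j → j ≤ k → (∫ ω, |ζ ω| ^ j ∂P) ≤ 2 * t ^ j := by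
    intro j hj1 hjk
    have key : ∀ ω, |ζ ω| ^ j * t ^ (k - j) ≤ t ^ k + |ζ ω| ^ k := by
      intro ω
      rcases le_or_gt (|ζ ω|) t with h | h
      · have : |ζ ω| ^ j * t ^ (k - j) ≤ t ^ j * t ^ (k - j) :=
          mul_le_mul_of_nonneg_right (pow_le_pow_left₀ (abs_nonneg _) h j)
            (pow_nonneg ht.le _)
        rw [← pow_add] at this
        rw [Nat.add_sub_cancel' hjk] at this
        nlinarith [pow_nonneg (abs_nonneg (ζ ω)) k]
      · have : |ζ ω| ^ j * t ^ (k - j) ≤ |ζ ω| ^ j * |ζ ω| ^ (k - j) :=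
          mul_le_mul_of_nonneg_left (pow_le_pow_left₀ ht.le h.le _)
            (pow_nonneg (abs_nonneg _) j)
        rw [← pow_add, Nat.add_sub_cancel' hjk] at this
        nlinarith [pow_pos ht k]
    have hInt1 : (∫ ω, |ζ ω| ^ j * t ^ (k - j) ∂P) ≤ ∫ ω, (t ^ k + |ζ ω| ^ k) ∂P :=
      integral_mono ((hζint j hjk).mul_const _) ((integrable_const _).add (hζint k le_rfl))
        (fun ω => key ω)
    rw [integral_mul_const, integral_add (integrable_const _) (hζint k le_rfl),
      integral_const] at hInt1
    simp only [measure_univ, ENNReal.toReal_one, probReal_univ, smul_eq_mul, one_mul] at hInt1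
    have hInt2 : (∫ ω, |ζ ω| ^ j ∂P) * t ^ (k - j) ≤ 2 * t ^ k := by
      calc (∫ ω, |ζ ω| ^ j ∂P) * t ^ (k - j) ≤ t ^ k + ∫ ω, |ζ ω| ^ k ∂P := hInt1
      _ ≤ t ^ k + t ^ k := by
          have : (∫ ω, |ζ ω| ^ k ∂P) ≤ t ^ k := by
            refine le_trans (le_of_eq ?_) hζk
            congr 1
          linarith
      _ = 2 * t ^ k := by ring
    have htkj : (0:ℝ) < t ^ (k - j) := pow_pos ht _
    have hpow : t ^ j * t ^ (k - j) = t ^ k := by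
      rw [← pow_add, Nat.add_sub_cancel' hjk]
    have hInt3 : (∫ ω, |ζ ω| ^ j ∂P) * t ^ (k - j) ≤ (2 * t ^ j) * t ^ (k - j) := by
      rw [mul_assoc, hpow]; exact hInt2
    exact le_of_mul_le_mul_right hInt3 htkj
  -- the bounded factors
  set f : Ω → ℝ := fun ω => α ω * α' ω with hfdef
  set g : Ω → ℝ := fun ω => Real.sqrt ((1 - α ω ^ 2) * (1 - α' ω ^ 2)) with hgdef
  have hαsq : ∀ ω, α ω ^ 2 ≤ 1 := fun ω => by
    have h := hαb ω; rw [Set.mem_Icc] at h; nlinarith [h.1, h.2]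
  have hα'sq : ∀ ω, α' ω ^ 2 ≤ 1 := fun ω => by
    have h := hα'b ω; rw [Set.mem_Icc] at h; nlinarith [h.1, h.2]
  have hf1 : ∀ ω, |f ω| ≤ 1 := by
    intro ω
    have h := hαb ω; have h' := hα'b ω
    rw [Set.mem_Icc] at h h'
    rw [abs_mul]
    calc |α ω| * |α' ω| ≤ 1 * 1 := by
          exact mul_le_mul (abs_le.mpr ⟨h.1, h.2⟩) (abs_le.mpr ⟨h'.1, h'.2⟩)
            (abs_nonneg _) zero_le_one
    _ = 1 := one_mul 1
  have hg0 : ∀ ω, 0 ≤ g ω := fun ω => Real.sqrt_nonneg _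
  have hg1 : ∀ ω, |g ω| ≤ 1 := by
    intro ω
    rw [abs_of_nonneg (hg0 ω)]
    rw [show (1:ℝ) = Real.sqrt 1 by simp]
    exact Real.sqrt_le_sqrt (by nlinarith [hαsq ω, hα'sq ω])
  have hfm : Measurable f := hα.mul hα'
  have hgm : Measurable g :=
    ((measurable_const.sub (hα.pow_const 2)).mul
      (measurable_const.sub (hα'.pow_const 2))).sqrt
  -- expand via binomial theorem
  set T : ℕ → Ω → ℝ := fun i ω => f ω ^ i * (g ω * ζ ω) ^ (k - i) * (k.choose i : ℝ)
    with hTdef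
  have hTabs : ∀ i ω, |T i ω| ≤ (k.choose i : ℝ) * |ζ ω| ^ (k - i) := by
    intro i ω
    simp only [hTdef, abs_mul, abs_pow]
    have h1 : |f ω| ^ i ≤ 1 := pow_le_one₀ (abs_nonneg _) (hf1 ω)
    have h2 : |g ω| ^ (k - i) ≤ 1 := pow_le_one₀ (abs_nonneg _) (hg1 ω)
    have h3 : (|g ω| * |ζ ω|) ^ (k - i) ≤ |ζ ω| ^ (k - i) := by
      apply pow_le_pow_left₀ (by positivity)
      nlinarith [hg1 ω, abs_nonneg (ζ ω), abs_nonneg (g ω)]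
    have h4 : (0:ℝ) ≤ |ζ ω| ^ (k - i) := pow_nonneg (abs_nonneg _) _
    have h5 : |(k.choose i : ℝ)| = (k.choose i : ℝ) := abs_of_nonneg (by positivity)
    rw [h5]
    calc |f ω| ^ i * (|g ω| * |ζ ω|) ^ (k-i) * (k.choose i : ℝ)
        ≤ 1 * |ζ ω| ^ (k - i) * (k.choose i : ℝ) := by
          apply mul_le_mul_of_nonneg_right _ (by positivity)
          exact mul_le_mul h1 h3 (pow_nonneg (by positivity) _) zero_le_one
    _ = (k.choose i : ℝ) * |ζ ω| ^ (k - i) := by ring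
  have hTm : ∀ i, Measurable (T i) := by
    intro i
    exact ((hfm.pow_const i).mul ((hgm.mul hζ).pow_const (k - i))).mul measurable_const
  have hTint : ∀ i, Integrable (T i) P := by
    intro i
    refine Integrable.mono (((hζint (k - i) (Nat.sub_le _ _)).const_mul ((k.choose i : ℝ))))
      (hTm i).aestronglyMeasurable (Filter.Eventually.of_forall fun ω => ?_)
    rw [Real.norm_eq_abs, Real.norm_eq_abs]
    refine le_trans (hTabs i ω) (le_abs_self _)
  -- the binomial expansion
  have hexp : (fun ω => (α ω * α' ω +
      Real.sqrt ((1 - α ω ^ 2) * (1 - α' ω ^ 2)) * ζ ω) ^ k)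
      = fun ω => ∑ i ∈ Finset.range (k + 1), T i ω := by
    funext ω
    rw [add_pow]
  rw [hexp]
  rw [integral_finset_sum _ (fun i _ => hTint i)]
  -- split off the i = k term
  rw [Finset.sum_range_succ]
  -- the top term
  have htop : (∫ ω, T k ω ∂P) = (∫ ω, α ω ^ k ∂P) ^ 2 := by
    have h1 : T k = fun ω => α ω ^ k * α' ω ^ k := by
      funext ω
      simp [hTdef, hfdef, Nat.sub_self, mul_pow]
    rw [h1]
    have hIndk : IndepFun (fun ω => α ω ^ k) (fun ω => α' ω ^ k) P :=
      hInd.comp (measurable_id.pow_const k) (measurable_id.pow_const k)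
    have := hIndk.integral_mul_eq_mul_integral ((hα.pow_const k).aestronglyMeasurable)
      ((hα'.pow_const k).aestronglyMeasurable)
    rw [show ((fun ω => α ω ^ k) * fun ω => α' ω ^ k) = fun ω => α ω ^ k * α' ω ^ k
      from rfl] at this
    rw [this]
    have heq : (∫ ω, α' ω ^ k ∂P) = ∫ ω, α ω ^ k ∂P :=
      ((hId.symm).comp (measurable_id.pow_const k)).integral_eq
    rw [heq]; ring
  rw [htop]
  -- bound the rest
  have hrest : (∑ i ∈ Finset.range k, ∫ ω, T i ω ∂P)
      ≤ 2 ^ (k + 1) * M ^ k / Real.sqrt d := by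
    have hbound : ∀ i ∈ Finset.range k,
        (∫ ω, T i ω ∂P) ≤ (k.choose i : ℝ) * (2 * M ^ k / Real.sqrt d) := by
      intro i hi
      rw [Finset.mem_range] at hi
      have hj1 : 1 ≤ k - i := Nat.le_sub_of_add_le (by omega)
      have hjk : k - i ≤ k := Nat.sub_le _ _
      have h1 : (∫ ω, T i ω ∂P) ≤ ∫ ω, (k.choose i : ℝ) * |ζ ω| ^ (k - i) ∂P := by
        refine integral_mono (hTint i) ((hζint (k - i) (Nat.sub_le _ _)).const_mul _) fun ω => ?_
        exact le_trans (le_abs_self _) (hTabs i ω)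
      rw [integral_const_mul] at h1
      have h2 : (∫ ω, |ζ ω| ^ (k - i) ∂P) ≤ 2 * t ^ (k - i) := hζmom _ hj1 hjk
      have h3 : t ^ (k - i) ≤ M ^ k / Real.sqrt d := by
        rw [htdef, div_pow]
        have hnum : C ^ (k - i) ≤ M ^ k := by
          calc C ^ (k - i) ≤ M ^ (k - i) := pow_le_pow_left₀ hC.le hCM _
          _ ≤ M ^ k := pow_le_pow_right₀ hM1 hjk
        have hden : Real.sqrt d ≤ Real.sqrt d ^ (k - i) :=
          le_self_pow₀ hsd (by omega)
        have hden0 : (0:ℝ) < Real.sqrt d ^ (k - i) := pow_pos hsd0 _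
        rw [div_le_div_iff₀ hden0 hsd0]
        exact mul_le_mul hnum hden hsd0.le (by positivity)
      calc (∫ ω, T i ω ∂P) ≤ (k.choose i : ℝ) * (∫ ω, |ζ ω| ^ (k - i) ∂P) := h1
      _ ≤ (k.choose i : ℝ) * (2 * t ^ (k - i)) := by
          exact mul_le_mul_of_nonneg_left h2 (by positivity)
      _ ≤ (k.choose i : ℝ) * (2 * (M ^ k / Real.sqrt d)) := by
          refine mul_le_mul_of_nonneg_left ?_ (by positivity)
          linarith
      _ = (k.choose i : ℝ) * (2 * M ^ k / Real.sqrt d) := by ring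
    calc (∑ i ∈ Finset.range k, ∫ ω, T i ω ∂P)
        ≤ ∑ i ∈ Finset.range k, (k.choose i : ℝ) * (2 * M ^ k / Real.sqrt d) :=
          Finset.sum_le_sum hbound
    _ = (∑ i ∈ Finset.range k, (k.choose i : ℝ)) * (2 * M ^ k / Real.sqrt d) := by
          rw [Finset.sum_mul]
    _ ≤ (2 : ℝ) ^ k * (2 * M ^ k / Real.sqrt d) := by
          refine mul_le_mul_of_nonneg_right ?_ (by positivity)
          have : (∑ i ∈ Finset.range k, (k.choose i : ℝ))
              ≤ ∑ i ∈ Finset.range (k + 1), (k.choose i : ℝ) := by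
            rw [Finset.sum_range_succ]
            nlinarith [show (0:ℝ) ≤ (k.choose k : ℝ) from Nat.cast_nonneg _]
          refine le_trans this ?_
          rw [← Nat.cast_sum]
          rw [Nat.sum_range_choose]
          rw [show ((2:ℝ) ^ k) = ((2 ^ k : ℕ) : ℝ) by push_cast; ring]
    _ = 2 ^ (k + 1) * M ^ k / Real.sqrt d := by ring
  linarith
end

section
/- Let p ∈ (0, 1/2) and u ∈ ℝᵈ with ‖u‖ = 1. Consider Δ : [m] → ℝᵈ where Δ(i) = u for a p-fraction of indices and Δ(i) = 0 for the rest, and the flow dΔ_t(i)/dt = −(m⁻¹ Σ_j Δ_t(j)) starting at Δ₀ = Δ. Then at t = 0, the derivative of m⁻¹ Σ_i ‖Δ_t(i)‖ equals −p·p + (1−p)·p = p(1 − 2p) > 0; in particular the average norm m⁻¹Σ_i‖Δ_t(i)‖ is strictly increasing at t = 0. -/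
open Set Filter Topology

/-- Right derivative of `‖f ·‖` at a zero of `f` is `‖f'‖`. -/
lemma norm_hasDerivWithinAt_of_zero {F : Type*} [NormedAddCommGroup F] [NormedSpace ℝ F]
    {f : ℝ → F} {v : F} (hf : HasDerivAt f v 0) (h0 : f 0 = 0) :
    HasDerivWithinAt (fun t => ‖f t‖) ‖v‖ (Set.Ici (0:ℝ)) 0 := by
  rw [hasDerivWithinAt_iff_tendsto_slope, Set.Ici_sdiff_left]
  have h1 : Tendsto (slope f 0) (𝓝[>] (0:ℝ)) (𝓝 v) :=
    (hasDerivAt_iff_tendsto_slope.mp hf).mono_left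
      (nhdsWithin_mono _ (fun t ht => ne_of_gt ht))
  have h2 : Tendsto (fun t => ‖slope f 0 t‖) (𝓝[>] (0:ℝ)) (𝓝 ‖v‖) :=
    (continuous_norm.tendsto v).comp h1
  refine h2.congr' ?_
  filter_upwards [self_mem_nhdsWithin] with t (ht : 0 < t)
  simp only [slope_def_module, h0, sub_zero, norm_smul, norm_inv, Real.norm_eq_abs,
    abs_of_pos ht, smul_eq_mul, norm_zero, sub_zero]

/-- Counterexample showing the L1 potential can increase under the mean-interaction flow:
if `Δ₀(i) = u` on a `p`-fraction of indices (with `p < 1/2`) and `0` elsewhere, the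
(right) derivative of `m⁻¹ Σ_i ‖Δ_t(i)‖` at `t = 0` equals `−p·p + (1−p)·p = p(1−2p) > 0`. -/
theorem stmt14 (d m : ℕ) (hm : 0 < m) (p : ℝ) (hp : p ∈ Set.Ioo (0 : ℝ) (1 / 2))
    (u : EuclideanSpace ℝ (Fin d)) (hu : ‖u‖ = 1)
    (S : Finset (Fin m)) (hS : (S.card : ℝ) = p * m)
    (Δ : ℝ → Fin m → EuclideanSpace ℝ (Fin d))
    (hΔ0 : ∀ i, Δ 0 i = if i ∈ S then u else 0)
    (hflow : ∀ (t : ℝ) (i : Fin m), HasDerivAt (fun t => Δ t i)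
      (-((m : ℝ)⁻¹ • ∑ j, Δ t j)) t) :
    HasDerivWithinAt (fun t => (m : ℝ)⁻¹ * ∑ i, ‖Δ t i‖)
        (p * (1 - 2 * p)) (Set.Ici 0) 0 ∧
      0 < p * (1 - 2 * p) := by
  obtain ⟨hp0, hp2⟩ := hp
  have hmR : (m : ℝ) ≠ 0 := Nat.cast_ne_zero.mpr hm.ne'
  -- the common velocity at time 0
  have hsum : (∑ j, Δ 0 j) = (S.card : ℝ) • u := by
    simp only [hΔ0]
    rw [Finset.sum_ite_mem, Finset.univ_inter, Finset.sum_const, ← Nat.cast_smul_eq_nsmul ℝ]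
  have hv : -((m : ℝ)⁻¹ • ∑ j, Δ 0 j) = (-p) • u := by
    rw [hsum, hS, smul_smul, neg_smul]
    congr 1
    field_simp
  -- per-index derivatives
  have hder : ∀ i : Fin m, HasDerivWithinAt (fun t => ‖Δ t i‖)
      (if i ∈ S then -p else p) (Set.Ici (0:ℝ)) 0 := by
    intro i
    by_cases hi : i ∈ S
    · simp only [hi, if_pos]
      have hΔi : Δ 0 i = u := by rw [hΔ0]; simp [hi]
      have hsq : HasDerivAt (fun t => ‖Δ t i‖ ^ 2)
          (2 * inner ℝ (Δ 0 i) (-((m : ℝ)⁻¹ • ∑ j, Δ 0 j))) 0 := (hflow 0 i).norm_sq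
      have hinner : (2 : ℝ) * inner ℝ (Δ 0 i) (-((m : ℝ)⁻¹ • ∑ j, Δ 0 j)) = -2 * p := by
        rw [hv, hΔi, real_inner_smul_right, real_inner_self_eq_norm_sq, hu]
        ring
      rw [hinner] at hsq
      have hne : ‖Δ 0 i‖ ^ 2 ≠ 0 := by rw [hΔi, hu]; norm_num
      have := hsq.sqrt hne
      have heq : (fun t => Real.sqrt (‖Δ t i‖ ^ 2)) = fun t => ‖Δ t i‖ := by
        funext t; exact Real.sqrt_sq (norm_nonneg _)
      rw [heq] at this
      have hval : -2 * p / (2 * Real.sqrt (‖Δ 0 i‖ ^ 2)) = -p := by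
        rw [hΔi, hu]; norm_num; ring
      rw [hval] at this
      exact this.hasDerivWithinAt
    · simp only [hi, if_neg, if_false]
      have hΔi : Δ 0 i = 0 := by rw [hΔ0]; simp [hi]
      have := norm_hasDerivWithinAt_of_zero (hflow 0 i) hΔi
      rwa [hv, norm_smul, Real.norm_eq_abs, abs_neg, abs_of_pos hp0, hu, mul_one] at this
  -- sum up
  have hcard : S.card ≤ m := by
    simpa using Finset.card_le_card (Finset.subset_univ S)
  have hsumder : HasDerivWithinAt (fun t => ∑ i, ‖Δ t i‖)
      (∑ i, if i ∈ S then -p else p) (Set.Ici (0:ℝ)) 0 :=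
    HasDerivWithinAt.fun_sum (fun i _ => hder i)
  have hval : (m : ℝ)⁻¹ * (∑ i : Fin m, if i ∈ S then -p else p) = p * (1 - 2 * p) := by
    have h : ∀ i : Fin m, (if i ∈ S then -p else p) = p - (if i ∈ S then 2*p else 0) := by
      intro i; split <;> ring
    have hsum2 : (∑ i : Fin m, if i ∈ S then -p else p) = m * p - 2 * p * S.card := by
      simp_rw [h]
      rw [Finset.sum_sub_distrib, Finset.sum_const, Finset.sum_ite_mem, Finset.univ_inter,
        Finset.sum_const]
      simp only [Finset.card_univ, Fintype.card_fin, nsmul_eq_mul]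
      ring
    rw [hsum2, hS]
    field_simp
  constructor
  · have h := hsumder.const_mul ((m : ℝ)⁻¹)
    rwa [hval] at h
  · have : 0 < 1 - 2 * p := by linarith
    exact mul_pos hp0 this
end
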